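/- Let w be a finite balanced word over the binary alphabet {a,b} and let k be a positive integer. Then the Parikh vector of w is componentwise divisible by k (i.e., both |w|_a and |w|_b are divisible by k) if and only if w is an abelian k-power (i.e., w = v_1 v_2 ⋯ v_k where all the v_i have the same Parikh vector). -/

import Mathlib

/-- A finite binary word is balanced if any two factors of the same length have
numbers of occurrences of `true` differing by at most 1. -/
def BalancedWord (w : List Bool) : Prop :=
  ∀ u v : List Bool, u <:+: w → v <:+: w → u.length = v.length →
    (u.count true : ℤ) - (v.count true : ℤ) ≤ 1

/-- `w` is an abelian `k`-power: `w = v₁v₂⋯v_k` where all the `vᵢ` have the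
same Parikh vector. -/
def IsAbelianKPower (w : List Bool) (k : ℕ) : Prop :=
  ∃ l : List (List Bool), l.length = k ∧ w = l.flatten ∧
    ∀ u ∈ l, ∀ v ∈ l, ∀ c, u.count c = v.count c

lemma count_true_add_count_false (w : List Bool) :
    w.count true + w.count false = w.length := by
  induction w with
  | nil => rfl
  | cons a t ih => cases a <;> simp [List.count_cons] <;> omega

lemma chunks (k : ℕ) (m : ℕ) : ∀ w : List Bool, w.length = k * m →
    ∃ l : List (List Bool), l.length = k ∧ (∀ u ∈ l, u.length = m) ∧ l.flatten = w := by
  induction k with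
  | zero =>
    intro w h
    exact ⟨[], rfl, by simp, by simpa using (List.length_eq_zero_iff.mp (by simpa using h)).symm⟩
  | succ k ih =>
    intro w h
    have hm : m ≤ w.length := by rw [h]; nlinarith [Nat.succ_mul k m]
    obtain ⟨l, hl, hlen, hfl⟩ := ih (w.drop m) (by simp [h, Nat.succ_mul])
    refine ⟨w.take m :: l, by simp [hl], ?_, by simp [hfl]⟩
    intro u hu
    rcases List.mem_cons.mp hu with rfl | hu
    · simp [min_eq_left hm]
    · exact hlen u hu

lemma key (l : List ℕ) (t : ℕ) (hsum : l.sum = l.length * t)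
    (hdiff : ∀ x ∈ l, ∀ y ∈ l, (x:ℤ) - y ≤ 1) : ∀ x ∈ l, x = t := by
  intro x hx
  obtain ⟨l1, l2, rfl⟩ := List.append_of_mem hx
  by_contra hne
  rcases Nat.lt_or_ge x t with hlt | hge
  · -- every y ≤ x + 1 ≤ t
    have hy : ∀ y ∈ l1 ++ x :: l2, y ≤ t := by
      intro y hy
      have := hdiff y hy x hx
      omega
    have h1 : l1.sum ≤ l1.length * t :=
      by simpa [mul_comm] using List.sum_le_card_nsmul l1 t (fun y hy' => hy y (by simp [hy']))
    have h2 : l2.sum ≤ l2.length * t :=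
      by simpa [mul_comm] using List.sum_le_card_nsmul l2 t (fun y hy' => hy y (by simp [hy']))
    simp [List.sum_append, List.length_append] at hsum
    nlinarith
  · have hxt : t < x := lt_of_le_of_ne hge (fun h => hne h.symm)
    have hy : ∀ y ∈ l1 ++ x :: l2, t ≤ y := by
      intro y hy
      have := hdiff x hx y hy
      omega
    have h1 : l1.length * t ≤ l1.sum :=
      by simpa [mul_comm] using List.card_nsmul_le_sum l1 t (fun y hy' => hy y (by simp [hy']))
    have h2 : l2.length * t ≤ l2.sum :=
      by simpa [mul_comm] using List.card_nsmul_le_sum l2 t (fun y hy' => hy y (by simp [hy']))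
    simp [List.sum_append, List.length_append] at hsum
    nlinarith

/-- For a nonempty balanced binary word `w` and `k > 0`: the Parikh vector of
`w` is componentwise divisible by `k` iff `w` is an abelian `k`-power. -/
theorem stmt3 (w : List Bool) (hw : w ≠ []) (hbal : BalancedWord w) (k : ℕ)
    (hk : 0 < k) :
    (k ∣ w.count true ∧ k ∣ w.count false) ↔ IsAbelianKPower w k := by
  constructor
  · rintro ⟨⟨t, ht⟩, ⟨s, hs⟩⟩
    have hlen : w.length = k * (t + s) := by
      rw [← count_true_add_count_false w, ht, hs]; ring
    obtain ⟨l, hl, hulen, hfl⟩ := chunks k (t + s) w hlen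
    refine ⟨l, hl, hfl.symm, ?_⟩
    -- counts of true in chunks
    have hinfix : ∀ u ∈ l, u <:+: w := by
      intro u hu
      rw [← hfl]
      exact List.infix_of_mem_flatten hu
    have hdiff : ∀ x ∈ l.map (List.count true), ∀ y ∈ l.map (List.count true),
        (x:ℤ) - y ≤ 1 := by
      intro x hx y hy
      simp only [List.mem_map] at hx hy
      obtain ⟨u, hu, rfl⟩ := hx
      obtain ⟨v, hv, rfl⟩ := hy
      exact hbal u v (hinfix u hu) (hinfix v hv) (by rw [hulen u hu, hulen v hv])
    have hsum : (l.map (List.count true)).sum = (l.map (List.count true)).length * t := by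
      have hcf : (l.map (List.count true)).sum = k * t := by
        rw [← List.count_flatten, hfl, ht]
      simp only [List.length_map, hl]
      omega
    have hkey := key _ t hsum hdiff
    have hct : ∀ u ∈ l, u.count true = t := by
      intro u hu
      exact hkey _ (List.mem_map_of_mem hu)
    intro u hu v hv c
    cases c
    · have h1 := count_true_add_count_false u
      have h2 := count_true_add_count_false v
      rw [hulen u hu] at h1; rw [hulen v hv] at h2
      rw [hct u hu] at h1; rw [hct v hv] at h2
      omega
    · rw [hct u hu, hct v hv]
  · rintro ⟨l, hl, rfl, hcount⟩
    rcases List.exists_mem_of_length_pos (by rw [hl]; exact hk) with ⟨v0, hv0⟩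
    have hc : ∀ c, (l.flatten).count c = k * v0.count c := by
      intro c
      rw [List.count_flatten]
      have hall : ∀ x ∈ l.map (List.count c), x = v0.count c := by
        intro x hx
        simp only [List.mem_map] at hx
        obtain ⟨u, hu, rfl⟩ := hx
        exact hcount u hu v0 hv0 c
      rw [List.sum_eq_card_nsmul _ _ hall]
      simp [hl, mul_comm]
    exact ⟨⟨v0.count true, hc true⟩, ⟨v0.count false, hc false⟩⟩
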